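/- Let a, b > 0 with a ≠ b and suppose k : ℝ → (0,1) satisfies the general ODE k' = k(1−k)(μ·k + c) for constants μ, c ∈ ℝ, with the asymptotic conditions k'(x)/k(x) → a/b as x → −∞ and k'(x)/(1−k(x)) → 1 as x → +∞. Then c = a/b and μ = 1 − a/b. -/

import Mathlib

open Filter

lemma no_pos_deriv_limit_atBot (k f : ℝ → ℝ) (hk : ∀ x, k x ∈ Set.Ioo (0:ℝ) 1)
    (hd : ∀ x, HasDerivAt k (f x) x) (d : ℝ) (hdpos : 0 < d)
    (ht : Tendsto f atBot (nhds d)) : False := by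
  have h1 : ∀ᶠ x in atBot, f x > d/2 := ht.eventually (eventually_gt_nhds (by linarith))
  obtain ⟨Y, hY⟩ := eventually_atBot.1 h1
  set x0 : ℝ := Y - 4/d with hx0
  have hxY : x0 < Y := by
    have : (0:ℝ) < 4/d := by positivity
    rw [hx0]; linarith
  obtain ⟨ξ, hξ, hslope⟩ := exists_hasDerivAt_eq_slope k f hxY
    (fun x _ => (hd x).continuousAt.continuousWithinAt)
    (fun x _ => hd x)
  have hfd : f ξ > d/2 := hY ξ (le_of_lt hξ.2)
  have hYx : Y - x0 = 4/d := by rw [hx0]; ring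
  have h2 : k Y - k x0 = f ξ * (Y - x0) := by
    rw [eq_div_iff (by linarith : Y - x0 ≠ 0)] at hslope
    linarith
  have : k Y - k x0 > 2 := by
    rw [h2, hYx]
    have h4 : (0:ℝ) < 4/d := by positivity
    calc f ξ * (4/d) > d/2 * (4/d) := by exact mul_lt_mul_of_pos_right hfd h4
      _ = 2 := by field_simp; ring
  have hk1 := hk Y
  have hk2 := hk x0
  simp [Set.mem_Ioo] at hk1 hk2
  linarith

lemma no_pos_deriv_limit_atTop (k f : ℝ → ℝ) (hk : ∀ x, k x ∈ Set.Ioo (0:ℝ) 1)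
    (hd : ∀ x, HasDerivAt k (f x) x) (d : ℝ) (hdpos : 0 < d)
    (ht : Tendsto f atTop (nhds d)) : False := by
  have h1 : ∀ᶠ x in atTop, f x > d/2 := ht.eventually (eventually_gt_nhds (by linarith))
  obtain ⟨Y, hY⟩ := eventually_atTop.1 h1
  set x1 : ℝ := Y + 4/d with hx1
  have hxY : Y < x1 := by
    have : (0:ℝ) < 4/d := by positivity
    rw [hx1]; linarith
  obtain ⟨ξ, hξ, hslope⟩ := exists_hasDerivAt_eq_slope k f hxY
    (fun x _ => (hd x).continuousAt.continuousWithinAt)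
    (fun x _ => hd x)
  have hfd : f ξ > d/2 := hY ξ (le_of_lt hξ.1)
  have hYx : x1 - Y = 4/d := by rw [hx1]; ring
  have h2 : k x1 - k Y = f ξ * (x1 - Y) := by
    rw [eq_div_iff (by linarith : x1 - Y ≠ 0)] at hslope
    linarith
  have : k x1 - k Y > 2 := by
    rw [h2, hYx]
    have h4 : (0:ℝ) < 4/d := by positivity
    calc f ξ * (4/d) > d/2 * (4/d) := by exact mul_lt_mul_of_pos_right hfd h4
      _ = 2 := by field_simp; ring
  have hk1 := hk Y
  have hk2 := hk x1
  simp [Set.mem_Ioo] at hk1 hk2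
  linarith

theorem stmt_7 (a b μ c : ℝ) (ha : 0 < a) (hb : 0 < b) (hab : a ≠ b) (k : ℝ → ℝ)
    (hk : ∀ x, k x ∈ Set.Ioo (0:ℝ) 1)
    (hode : ∀ x, HasDerivAt k (k x * (1 - k x) * (μ * k x + c)) x)
    (hmin : Tendsto (fun x => deriv k x / k x) atBot (nhds (a / b)))
    (hplus : Tendsto (fun x => deriv k x / (1 - k x)) atTop (nhds 1)) :
    c = a / b ∧ μ = 1 - a / b := by
  have hkpos : ∀ x, 0 < k x := fun x => (hk x).1
  have hklt : ∀ x, k x < 1 := fun x => (hk x).2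
  have hderiv : ∀ x, deriv k x = k x * (1 - k x) * (μ * k x + c) := fun x => (hode x).deriv
  have hab' : 0 < a / b := div_pos ha hb
  -- F(y) = (1-y)(μy+c), G(y) = y(μy+c)
  set F : ℝ → ℝ := fun y => (1 - y) * (μ * y + c) with hF
  set G : ℝ → ℝ := fun y => y * (μ * y + c) with hG
  have hFk : ∀ x, deriv k x / k x = F (k x) := by
    intro x
    rw [hderiv x]
    field_simp [hF, (hkpos x).ne']
    ring
  have hGk : ∀ x, deriv k x / (1 - k x) = G (k x) := by
    intro x
    have h1 : (1 : ℝ) - k x ≠ 0 := by have := hklt x; linarith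
    rw [hderiv x]
    field_simp [hG]
    ring
  have hminF : Tendsto (fun x => F (k x)) atBot (nhds (a / b)) := by
    refine hmin.congr fun x => hFk x
  have hplusG : Tendsto (fun x => G (k x)) atTop (nhds 1) := by
    refine hplus.congr fun x => hGk x
  -- eventually deriv positive at -∞
  have hev1 : ∀ᶠ x in atBot, 0 < deriv k x := by
    filter_upwards [hmin.eventually (eventually_gt_nhds (show a/b/2 < a/b by linarith))] with x hx
    have := hkpos x
    have h2 : 0 < deriv k x / k x := lt_trans (by positivity) hx
    exact (div_pos_iff.1 h2).resolve_right (fun h => absurd this (not_lt.2 h.2.le)) |>.1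
  obtain ⟨X, hX⟩ := eventually_atBot.1 hev1
  have hmono : StrictMonoOn k (Set.Iic X) := by
    apply strictMonoOn_of_deriv_pos (convex_Iic X)
      (fun x _ => (hode x).continuousAt.continuousWithinAt)
    intro x hx
    rw [interior_Iic] at hx
    exact hX x hx.le
  -- h = k ∘ min · X, monotone
  set h : ℝ → ℝ := fun x => k (min x X) with hh
  have hhmono : Monotone h := by
    intro x y hxy
    rcases eq_or_lt_of_le (min_le_min_right X hxy) with heq | hlt
    · simp [hh, heq]
    · exact (hmono (Set.mem_Iic.2 (min_le_right x X)) (Set.mem_Iic.2 (min_le_right y X)) hlt).le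
  have hhbdd : BddBelow (Set.range h) := ⟨0, fun y ⟨x, hx⟩ => hx ▸ (hkpos _).le⟩
  have hhlim : Tendsto h atBot (nhds (⨅ i, h i)) := tendsto_atBot_ciInf hhmono hhbdd
  set L : ℝ := ⨅ i, h i with hL
  have hklim : Tendsto k atBot (nhds L) := by
    refine hhlim.congr' ?_
    filter_upwards [eventually_le_atBot X] with x hx
    simp [hh, min_eq_left hx]
  have hL0 : 0 ≤ L := le_ciInf fun i => (hkpos _).le
  have hL1 : L ≤ 1 := by
    have := ciInf_le hhbdd 0
    exact this.trans (hklt _).le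
  have hFcont : Continuous F := by fun_prop
  have hFL : F L = a / b := by
    have h1 : Tendsto (fun x => F (k x)) atBot (nhds (F L)) :=
      (hFcont.tendsto L).comp hklim
    exact tendsto_nhds_unique h1 hminF
  -- deriv k → L * F L at -∞
  have hdlim : Tendsto (fun x => k x * (1 - k x) * (μ * k x + c)) atBot (nhds (L * F L)) := by
    have hc : Continuous (fun y : ℝ => y * (1 - y) * (μ * y + c)) := by fun_prop
    have := (hc.tendsto L).comp hklim
    convert this using 1
    · rfl
    · congr 1; simp only [hF]; ring
  have hLzero : L = 0 := by
    by_contra hLne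
    have hLpos : 0 < L := lt_of_le_of_ne hL0 (Ne.symm hLne)
    have : 0 < L * F L := by rw [hFL]; positivity
    exact no_pos_deriv_limit_atBot k _ hk hode _ this hdlim
  have hc : c = a / b := by
    have := hFL
    rw [hLzero] at this
    simpa [hF] using this
  refine ⟨hc, ?_⟩
  -- now at +∞
  have hev2 : ∀ᶠ x in atTop, 0 < deriv k x := by
    filter_upwards [hplus.eventually (eventually_gt_nhds (show (1:ℝ)/2 < 1 by norm_num))] with x hx
    have h1 : (0:ℝ) < 1 - k x := by have := hklt x; linarith
    have h2 : 0 < deriv k x / (1 - k x) := lt_trans (by positivity) hx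
    exact (div_pos_iff.1 h2).resolve_right (fun h => absurd h1 (not_lt.2 h.2.le)) |>.1
  obtain ⟨X', hX'⟩ := eventually_atTop.1 hev2
  have hmono' : StrictMonoOn k (Set.Ici X') := by
    apply strictMonoOn_of_deriv_pos (convex_Ici X')
      (fun x _ => (hode x).continuousAt.continuousWithinAt)
    intro x hx
    rw [interior_Ici] at hx
    exact hX' x hx.le
  set h' : ℝ → ℝ := fun x => k (max x X') with hh'
  have hhmono' : Monotone h' := by
    intro x y hxy
    rcases eq_or_lt_of_le (max_le_max_right X' hxy) with heq | hlt
    · simp [hh', heq]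
    · exact (hmono' (Set.mem_Ici.2 (le_max_right x X')) (Set.mem_Ici.2 (le_max_right y X')) hlt).le
  have hhbdd' : BddAbove (Set.range h') := ⟨1, fun y ⟨x, hx⟩ => hx ▸ (hklt _).le⟩
  have hhlim' : Tendsto h' atTop (nhds (⨆ i, h' i)) := tendsto_atTop_ciSup hhmono' hhbdd'
  set M : ℝ := ⨆ i, h' i with hM
  have hklim' : Tendsto k atTop (nhds M) := by
    refine hhlim'.congr' ?_
    filter_upwards [eventually_ge_atTop X'] with x hx
    simp [hh', max_eq_left hx]
  have hM1 : M ≤ 1 := ciSup_le fun i => (hklt _).le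
  have hM0 : 0 ≤ M := (le_ciSup hhbdd' 0).trans' (hkpos _).le
  have hGcont : Continuous G := by fun_prop
  have hGM : G M = 1 := by
    have h1 : Tendsto (fun x => G (k x)) atTop (nhds (G M)) :=
      (hGcont.tendsto M).comp hklim'
    exact tendsto_nhds_unique h1 hplusG
  have hdlim' : Tendsto (fun x => k x * (1 - k x) * (μ * k x + c)) atTop
      (nhds ((1 - M) * G M)) := by
    have hcn : Continuous (fun y : ℝ => y * (1 - y) * (μ * y + c)) := by fun_prop
    have := (hcn.tendsto M).comp hklim'
    convert this using 1
    · rfl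
    · congr 1; simp only [hG]; ring
  have hMone : M = 1 := by
    by_contra hMne
    have hMlt : M < 1 := lt_of_le_of_ne hM1 hMne
    have : 0 < (1 - M) * G M := by rw [hGM]; linarith
    exact no_pos_deriv_limit_atTop k _ hk hode _ this hdlim'
  have hmc : μ + c = 1 := by
    have := hGM
    rw [hMone] at this
    simpa [hG] using this
  rw [hc] at hmc
  linarith
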